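/- Let F be the free abelian group on ℤ and let the fusion ring of SU_q(2) (free abelian group on ½ℕ with SU(2) fusion rules) act on F by [n]·[r] = Σ_{i=0}^{2r} [n − 2r + 2i]. Then this defines a module structure over the fusion ring: the action is compatible with the SU(2) fusion rules [r]·[s] = Σ_{t=|r−s|}^{r+s, step 1} [t]. -/

import Mathlib

/-- The action of the irreducible spin `r = m/2` (encoded by the doubled spin `m ∈ ℕ`) of
`SU_q(2)` on the basis projective representation `[n]`, `n ∈ ℤ`:
`[n]·[r] = Σ_{i=0}^{2r} [n - 2r + 2i]`, as an element of the free abelian group on `ℤ`. -/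
noncomputable def actOn (n : ℤ) (m : ℕ) : ℤ →₀ ℤ :=
  ∑ i ∈ Finset.range (m + 1), Finsupp.single (n - (m : ℤ) + 2 * (i : ℤ)) (1 : ℤ)

/-- The extension of `actOn` by additivity to the free abelian group on `ℤ`. -/
noncomputable def actF (f : ℤ →₀ ℤ) (m : ℕ) : ℤ →₀ ℤ :=
  f.sum fun n c => c • actOn n m

open LaurentPolynomial in
/-- `Σ_{i=0}^{m} T^{2i}` as a Laurent polynomial. -/
noncomputable def Qgeom (m : ℕ) : LaurentPolynomial ℤ :=
  ∑ i ∈ Finset.range (m + 1), T (2 * (i : ℤ))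

open LaurentPolynomial

lemma geom_step (m : ℕ) : (T 2 - 1) * Qgeom m = T (2 * ((m : ℤ) + 1)) - 1 := by
  induction m with
  | zero => simp [Qgeom]
  | succ k ih =>
    have hQ : Qgeom (k + 1) = Qgeom k + T (2 * ((k : ℤ) + 1)) := by
      rw [Qgeom, Qgeom, Finset.sum_range_succ]
      congr 2 <;> push_cast <;> ring
    have h2 : (T (2 * ((k : ℤ) + 1 + 1)) : LaurentPolynomial ℤ)
        = T 2 * T (2 * ((k : ℤ) + 1)) := by
      rw [← T_add]; congr 1; ring
    rw [hQ, mul_add, ih]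
    push_cast
    rw [h2]
    ring

lemma T2_sub_one_ne_zero : (T 2 - 1 : LaurentPolynomial ℤ) ≠ 0 := by
  intro h
  have h' : (T 2 : LaurentPolynomial ℤ) = T 0 := by
    rw [T_zero]; linear_combination h
  have h'' : (Finsupp.single (2 : ℤ) (1 : ℤ) : ℤ →₀ ℤ) = Finsupp.single 0 1 := congrArg AddMonoidAlgebra.coeff h'
  rw [Finsupp.single_eq_single_iff] at h''
  simp at h''

lemma key (m m' : ℕ) :
    Qgeom m * Qgeom m' =
      ∑ i ∈ Finset.range (min m m' + 1),
        T (2 * (((min m m' : ℕ) : ℤ) - i)) * Qgeom (m + m' - 2 * min m m' + 2 * i) := by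
  set μ := min m m' with hμ
  have hμm : μ ≤ m := Nat.min_le_left _ _
  have hμm' : μ ≤ m' := Nat.min_le_right _ _
  apply mul_left_cancel₀ T2_sub_one_ne_zero
  apply mul_left_cancel₀ T2_sub_one_ne_zero
  have hR : (T 2 - 1) * ∑ i ∈ Finset.range (μ + 1),
        T (2 * ((μ : ℤ) - i)) * Qgeom (m + m' - 2 * μ + 2 * i)
      = (T (2 * ((m : ℤ) + m' - μ + 1)) - 1) * Qgeom μ := by
    rw [Finset.mul_sum]
    have hterm : ∀ i ∈ Finset.range (μ + 1),
        (T 2 - 1) * (T (2 * ((μ : ℤ) - i)) * Qgeom (m + m' - 2 * μ + 2 * i))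
          = T (2 * ((m : ℤ) + m' - μ + 1 + i)) - T (2 * ((μ : ℤ) - i)) := by
      intro i hi
      have hre : (T 2 - 1) * (T (2 * ((μ : ℤ) - i)) * Qgeom (m + m' - 2 * μ + 2 * i))
          = T (2 * ((μ : ℤ) - i)) * ((T 2 - 1) * Qgeom (m + m' - 2 * μ + 2 * i)) := by ring
      rw [hre, geom_step]
      have hc : ((m + m' - 2 * μ + 2 * i : ℕ) : ℤ) = (m : ℤ) + m' - 2 * μ + 2 * i := by
        have h2μ : 2 * μ ≤ m + m' := by omega
        push_cast [Nat.cast_sub h2μ]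
        ring
      rw [hc, mul_sub, mul_one, ← T_add]
      congr 2
      ring
    rw [Finset.sum_congr rfl hterm, Finset.sum_sub_distrib]
    have h1 : ∑ i ∈ Finset.range (μ + 1), (T (2 * ((m : ℤ) + m' - μ + 1 + i))
          : LaurentPolynomial ℤ)
        = T (2 * ((m : ℤ) + m' - μ + 1)) * Qgeom μ := by
      rw [Qgeom, Finset.mul_sum]
      refine Finset.sum_congr rfl fun i _ => ?_
      rw [← T_add]; congr 1; ring
    have h2 : ∑ i ∈ Finset.range (μ + 1), (T (2 * ((μ : ℤ) - i)) : LaurentPolynomial ℤ)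
        = Qgeom μ := by
      rw [Qgeom, ← Finset.sum_range_reflect]
      refine Finset.sum_congr rfl fun i hi => ?_
      have hi' : i < μ + 1 := Finset.mem_range.mp hi
      congr 1
      have hcast : ((μ + 1 - 1 - i : ℕ) : ℤ) = (μ : ℤ) - i := by omega
      rw [hcast]
      ring
    rw [h1, h2]; ring
  rw [hR]
  have hL : (T 2 - 1) * ((T 2 - 1) * (Qgeom m * Qgeom m'))
      = (T (2 * ((m : ℤ) + 1)) - 1) * (T (2 * ((m' : ℤ) + 1)) - 1) := by
    have hre : (T 2 - 1) * ((T 2 - 1) * (Qgeom m * Qgeom m'))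
        = ((T 2 - 1) * Qgeom m) * ((T 2 - 1) * Qgeom m') := by ring
    rw [hre, geom_step, geom_step]
  rw [hL]
  have hre : (T 2 - 1) * ((T (2 * ((m : ℤ) + m' - μ + 1)) - 1) * Qgeom μ)
      = (T (2 * ((m : ℤ) + m' - μ + 1)) - 1) * ((T 2 - 1) * Qgeom μ) := by ring
  rw [hre, geom_step]
  rcases Nat.le_total m m' with h | h
  · have hm : μ = m := by omega
    rw [hm, show (m : ℤ) + m' - m + 1 = (m' : ℤ) + 1 from by ring]
    try ring
  · have hm : μ = m' := by omega
    rw [hm, show (m : ℤ) + m' - m' + 1 = (m : ℤ) + 1 from by ring]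
    try ring

lemma actOn_eq (n : ℤ) (m : ℕ) :
    (AddMonoidAlgebra.ofCoeff (actOn n m) : LaurentPolynomial ℤ) = T (n - m) * Qgeom m := by
  rw [actOn, AddMonoidAlgebra.ofCoeff_sum, Qgeom, Finset.mul_sum]
  refine Finset.sum_congr rfl fun i _ => ?_
  show (T (n - m + 2 * i) : LaurentPolynomial ℤ) = _
  rw [← T_add]

lemma actF_add (f g : ℤ →₀ ℤ) (m : ℕ) : actF (f + g) m = actF f m + actF g m := by
  unfold actF
  exact Finsupp.sum_add_index' (fun n => zero_smul ℤ _) (fun n c d => add_smul c d _)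

lemma actF_single (a : ℤ) (m : ℕ) : actF (Finsupp.single a 1) m = actOn a m := by
  unfold actF
  rw [Finsupp.sum_single_index, one_smul]
  rw [zero_smul]

lemma key2 (n : ℤ) (m m' : ℕ) :
    ∑ i ∈ Finset.range (m + 1), T (n - (m : ℤ) + 2 * (i : ℤ) - m') * Qgeom m'
      = ∑ i ∈ Finset.range (min m m' + 1),
          T (n - ((m + m' - 2 * min m m' + 2 * i : ℕ) : ℤ))
            * Qgeom (m + m' - 2 * min m m' + 2 * i) := by
  have h2μ : 2 * min m m' ≤ m + m' := by
    have := Nat.min_le_left m m'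
    have := Nat.min_le_right m m'
    omega
  have hL2 : ∑ i ∈ Finset.range (m + 1), T (n - (m : ℤ) + 2 * (i : ℤ) - m') * Qgeom m'
      = T (n - m - m') * (Qgeom m * Qgeom m') := by
    have hterm : ∀ i ∈ Finset.range (m + 1),
        (T (n - (m : ℤ) + 2 * (i : ℤ) - m') * Qgeom m' : LaurentPolynomial ℤ)
          = T (n - m - m') * (T (2 * (i : ℤ)) * Qgeom m') := by
      intro i _
      rw [← mul_assoc, ← T_add]
      congr 2
      ring
    rw [Finset.sum_congr rfl hterm, ← Finset.mul_sum]
    congr 1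
    rw [show Qgeom m = ∑ i ∈ Finset.range (m + 1), T (2 * (i : ℤ)) from rfl,
      Finset.sum_mul]
  have hR2 : (∑ i ∈ Finset.range (min m m' + 1),
        T (n - ((m + m' - 2 * min m m' + 2 * i : ℕ) : ℤ))
          * Qgeom (m + m' - 2 * min m m' + 2 * i) : LaurentPolynomial ℤ)
      = T (n - m - m') * ∑ i ∈ Finset.range (min m m' + 1),
          T (2 * (((min m m' : ℕ) : ℤ) - i)) * Qgeom (m + m' - 2 * min m m' + 2 * i) := by
    rw [Finset.mul_sum]
    refine Finset.sum_congr rfl fun i hi => ?_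
    rw [← mul_assoc, ← T_add]
    congr 2
    have hc : ((m + m' - 2 * min m m' + 2 * i : ℕ) : ℤ)
        = (m : ℤ) + m' - 2 * min m m' + 2 * i := by
      push_cast [Nat.cast_sub h2μ]
      ring
    rw [hc]
    ring
  rw [hL2, hR2, key]

/-- the prescription `[n]·[r] = Σ_{i=0}^{2r} [n − 2r + 2i]` makes the free
abelian group on `ℤ` a module over the fusion ring of `SU_q(2)`: the action is compatible
with the `SU(2)` fusion rules `[r]·[s] = Σ_{t=|r−s|}^{r+s} [t]` (doubled spins `m = 2r`,
`m' = 2s`, `t` ranging over `m + m' - 2·min(m,m') + 2i`, `0 ≤ i ≤ min(m,m')`). -/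
theorem stmt7 (n : ℤ) (m m' : ℕ) :
    actF (actOn n m) m' =
      ∑ i ∈ Finset.range (min m m' + 1), actOn n (m + m' - 2 * min m m' + 2 * i) := by
  have hL : actF (actOn n m) m' = ∑ i ∈ Finset.range (m + 1), actOn (n - m + 2 * i) m' := by
    rw [actOn]
    induction (Finset.range (m + 1)) using Finset.induction_on with
    | empty => simp [actF]
    | insert _ _ h ih =>
      rw [Finset.sum_insert h, actF_add, actF_single, ih, Finset.sum_insert h]
  rw [hL]
  apply (AddMonoidAlgebra.ofCoeff_injective :
    Function.Injective (AddMonoidAlgebra.ofCoeff : (ℤ →₀ ℤ) → LaurentPolynomial ℤ))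
  simp only [AddMonoidAlgebra.ofCoeff_sum, actOn_eq]
  exact key2 n m m'
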